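/- Let B be a Boolean algebra and g : 2^{<ω} → B a map with g(ε) = ⊤, g(σ) = g(σ0) ⊔ g(σ1) and g(σ0) ⊓ g(σ1) = ⊥ for every σ, whose image generates B. Let T = {σ ∈ 2^{<ω} : g(σ) ≠ ⊥}. Then every node of T has a child in T, and an element a ∈ B is an atom of B if and only if a = g(σ) for some σ ∈ T such that there is exactly one infinite binary sequence x extending σ all of whose finite initial segments belong to T (i.e., σ isolates a path of T). -/

import Mathlib

namespace Hhs

variable {B : Type*} [BooleanAlgebra B]

/-- Membership in the Boolean subalgebra generated by a set `S`. -/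
inductive InBoolGen (S : Set B) : B → Prop
  | basic {a : B} : a ∈ S → InBoolGen S a
  | bot : InBoolGen S ⊥
  | sup {a b : B} : InBoolGen S a → InBoolGen S b → InBoolGen S (a ⊔ b)
  | compl {a : B} : InBoolGen S a → InBoolGen S aᶜ

/-- A set `S` generates `B` if the Boolean subalgebra generated by `S` is all of `B`. -/
def GeneratesBool (S : Set B) : Prop := ∀ b : B, InBoolGen S b

/-- `IsPathThrough T σ x` says that the infinite binary sequence `x` extends the finite
string `σ` and all finite initial segments of `x` belong to `T`. -/
def IsPathThrough (T : Set (List Bool)) (σ : List Bool) (x : ℕ → Bool) : Prop :=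
  (List.ofFn fun i : Fin σ.length => x i) = σ ∧
    ∀ n : ℕ, (List.ofFn fun i : Fin n => x i) ∈ T

section Aux

variable (g : List Bool → B)

/-- Finset of extensions of `σ` by `k` more bits. -/
def extF (σ : List Bool) : ℕ → Finset (List Bool)
  | 0 => {σ}
  | (k+1) => (extF σ k).biUnion fun τ => {τ ++ [false], τ ++ [true]}

lemma list_concat_cases {τ : List Bool} (h : τ ≠ []) : ∃ τ' b, τ = τ' ++ [b] := by
  obtain ⟨τ', b, rfl⟩ := τ.eq_nil_or_concat.resolve_left h
  exact ⟨τ', b, by simp⟩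

lemma length_of_mem_extF {σ τ : List Bool} : ∀ {k : ℕ}, τ ∈ extF σ k → τ.length = σ.length + k
  | 0, h => by simp [extF] at h; simp [h]
  | (k+1), h => by
      simp only [extF, Finset.mem_biUnion, Finset.mem_insert, Finset.mem_singleton] at h
      obtain ⟨ρ, hρ, h | h⟩ := h <;> subst h <;>
        simp [List.length_append, length_of_mem_extF hρ, Nat.add_assoc]

lemma prefix_of_mem_extF {σ τ : List Bool} : ∀ {k : ℕ}, τ ∈ extF σ k → σ <+: τ
  | 0, h => by simp [extF] at h; simp [h]
  | (k+1), h => by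
      simp only [extF, Finset.mem_biUnion, Finset.mem_insert, Finset.mem_singleton] at h
      obtain ⟨ρ, hρ, h | h⟩ := h <;> subst h <;>
        exact (prefix_of_mem_extF hρ).trans (List.prefix_append _ _)

lemma mem_extF {σ τ : List Bool} : ∀ {k : ℕ}, τ.length = σ.length + k → σ <+: τ → τ ∈ extF σ k
  | 0, hl, hp => by
      simp only [Nat.add_zero] at hl
      have := hp.eq_of_length hl.symm
      subst this
      simp [extF]
  | (k+1), hl, hp => by
      obtain ⟨r, rfl⟩ := hp
      have hr : r ≠ [] := by
        rintro rfl; simp at hl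
      obtain ⟨r', b, rfl⟩ := list_concat_cases hr
      simp only [extF, Finset.mem_biUnion]
      refine ⟨σ ++ r', mem_extF ?_ (List.prefix_append _ _), ?_⟩
      · simp at hl ⊢; omega
      · cases b <;> simp [List.append_assoc]

lemma g_concat_le (hsup : ∀ σ : List Bool, g σ = g (σ ++ [false]) ⊔ g (σ ++ [true]))
    (σ : List Bool) (b : Bool) : g (σ ++ [b]) ≤ g σ := by
  cases b
  · rw [hsup σ]; exact le_sup_left
  · rw [hsup σ]; exact le_sup_right

lemma g_le_of_prefix (hsup : ∀ σ : List Bool, g σ = g (σ ++ [false]) ⊔ g (σ ++ [true]))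
    {σ τ : List Bool} (h : σ <+: τ) : g τ ≤ g σ := by
  obtain ⟨r, rfl⟩ := h
  induction r using List.reverseRecOn with
  | nil => simp
  | append_singleton r b ih =>
      rw [← List.append_assoc]
      exact (g_concat_le g hsup _ b).trans ih

lemma sup_extF (hsup : ∀ σ : List Bool, g σ = g (σ ++ [false]) ⊔ g (σ ++ [true]))
    (σ : List Bool) : ∀ k : ℕ, (extF σ k).sup g = g σ
  | 0 => by simp [extF]
  | (k+1) => by
      rw [extF, Finset.sup_biUnion]
      calc (extF σ k).sup (fun τ => ({τ ++ [false], τ ++ [true]} : Finset (List Bool)).sup g)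
          = (extF σ k).sup g := by
            refine Finset.sup_congr rfl fun τ _ => ?_
            simp only [Finset.sup_insert, Finset.sup_singleton]
            exact (hsup τ).symm
        _ = g σ := sup_extF hsup σ k

lemma g_disjoint_of_ne (hsup : ∀ σ : List Bool, g σ = g (σ ++ [false]) ⊔ g (σ ++ [true]))
    (hinf : ∀ σ : List Bool, g (σ ++ [false]) ⊓ g (σ ++ [true]) = ⊥)
    {σ τ : List Bool} (hl : σ.length = τ.length) (hne : σ ≠ τ) :
    g σ ⊓ g τ = ⊥ := by
  induction σ using List.reverseRecOn generalizing τ with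
  | nil => exact absurd (List.eq_nil_of_length_eq_zero hl.symm).symm hne
  | append_singleton σ' a ih =>
      have hτ : τ ≠ [] := by rintro rfl; simp at hl
      obtain ⟨τ', b, rfl⟩ := list_concat_cases hτ
      simp only [List.length_append, List.length_singleton] at hl
      have hl' : σ'.length = τ'.length := by omega
      by_cases hστ : σ' = τ'
      · subst hστ
        have hab : a ≠ b := by rintro rfl; exact hne rfl
        cases a <;> cases b <;> first
          | exact absurd rfl hab
          | exact hinf σ'
          | (rw [inf_comm]; exact hinf σ')
      · have h1 : g (σ' ++ [a]) ≤ g σ' := g_concat_le g hsup σ' a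
        have h2 : g (τ' ++ [b]) ≤ g τ' := g_concat_le g hsup τ' b
        exact le_bot_iff.mp ((inf_le_inf h1 h2).trans (ih hl' hστ).le)

/-- lift a level-`n` representation to level `n + k`. -/
lemma rep_lift (hsup : ∀ σ : List Bool, g σ = g (σ ++ [false]) ⊔ g (σ ++ [true]))
    {n : ℕ} {S : Finset (List Bool)} (hS : ∀ τ ∈ S, τ.length = n) (k : ℕ) :
    (∀ τ ∈ S.biUnion (extF · k), τ.length = n + k) ∧
      (S.biUnion (extF · k)).sup g = S.sup g := by
  constructor
  · intro τ hτ
    simp only [Finset.mem_biUnion] at hτ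
    obtain ⟨σ, hσ, hτ⟩ := hτ
    rw [length_of_mem_extF hτ, hS σ hσ]
  · rw [Finset.sup_biUnion]
    exact Finset.sup_congr rfl fun σ _ => sup_extF g hsup σ k

lemma rep_of_inBoolGen (hroot : g [] = ⊤)
    (hsup : ∀ σ : List Bool, g σ = g (σ ++ [false]) ⊔ g (σ ++ [true]))
    (hinf : ∀ σ : List Bool, g (σ ++ [false]) ⊓ g (σ ++ [true]) = ⊥)
    {b : B} (h : InBoolGen (Set.range g) b) :
    ∃ (n : ℕ) (S : Finset (List Bool)), (∀ τ ∈ S, τ.length = n) ∧ b = S.sup g := by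
  induction h with
  | basic hb =>
      obtain ⟨σ, rfl⟩ := hb
      exact ⟨σ.length, {σ}, by simp, by simp⟩
  | bot => exact ⟨0, ∅, by simp, by simp⟩
  | sup _ _ ih₁ ih₂ =>
      obtain ⟨n₁, S₁, hS₁, rfl⟩ := ih₁
      obtain ⟨n₂, S₂, hS₂, rfl⟩ := ih₂
      set m := max n₁ n₂
      obtain ⟨hL₁, hE₁⟩ := rep_lift g hsup hS₁ (m - n₁)
      obtain ⟨hL₂, hE₂⟩ := rep_lift g hsup hS₂ (m - n₂)
      refine ⟨m, S₁.biUnion (extF · (m - n₁)) ∪ S₂.biUnion (extF · (m - n₂)), ?_, ?_⟩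
      · intro τ hτ
        rcases Finset.mem_union.mp hτ with h | h
        · rw [hL₁ τ h]; omega
        · rw [hL₂ τ h]; omega
      · rw [Finset.sup_union, hE₁, hE₂]
  | compl _ ih =>
      obtain ⟨n, S, hS, rfl⟩ := ih
      have hsub : S ⊆ extF [] n := fun τ hτ =>
        mem_extF (by simpa using hS τ hτ) List.nil_prefix
      refine ⟨n, extF [] n \ S, fun τ hτ => by
        simpa using length_of_mem_extF (Finset.mem_sdiff.mp hτ).1, ?_⟩
      refine (IsCompl.of_eq ?_ ?_).compl_eq
      · rw [Finset.sup_inf_distrib_right]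
        rw [Finset.sup_eq_bot_iff]
        intro τ hτ
        rw [Finset.sup_inf_distrib_left, Finset.sup_eq_bot_iff]
        intro ρ hρ
        obtain ⟨hρ₁, hρ₂⟩ := Finset.mem_sdiff.mp hρ
        refine g_disjoint_of_ne g hsup hinf ?_ ?_
        · rw [hS τ hτ]; exact (by simpa using length_of_mem_extF hρ₁ : ρ.length = n).symm
        · rintro rfl; exact hρ₂ hτ
      · rw [← Finset.sup_union, Finset.union_sdiff_of_subset hsub, sup_extF g hsup, hroot]

end Aux

section Paths

lemma ofFn_take (x : ℕ → Bool) {k m : ℕ} (h : k ≤ m) :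
    (List.ofFn fun i : Fin m => x i).take k = List.ofFn fun i : Fin k => x i := by
  apply List.ext_getElem
  · simp; omega
  · intro i h₁ h₂
    simp only [List.getElem_take, List.getElem_ofFn]

lemma ofFn_prefix (x : ℕ → Bool) {k m : ℕ} (h : k ≤ m) :
    (List.ofFn fun i : Fin k => x i) <+: (List.ofFn fun i : Fin m => x i) := by
  rw [← ofFn_take x h]; exact List.take_prefix _ _

lemma isPathThrough_of_prefix {T : Set (List Bool)} {σ τ : List Bool} {x : ℕ → Bool}
    (hp : σ <+: τ) (h : IsPathThrough T τ x) : IsPathThrough T σ x := by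
  refine ⟨?_, h.2⟩
  have h1 : (List.ofFn fun i : Fin σ.length => x i) =
      (List.ofFn fun i : Fin τ.length => x i).take σ.length :=
    (ofFn_take x hp.length_le).symm
  rw [h1, h.1]
  exact (List.prefix_iff_eq_take.mp hp).symm

lemma exists_path {T : Set (List Bool)}
    (hdown : ∀ σ τ : List Bool, σ <+: τ → τ ∈ T → σ ∈ T)
    (hchild : ∀ τ ∈ T, ∃ b : Bool, τ ++ [b] ∈ T)
    {σ : List Bool} (hσ : σ ∈ T) : ∃ x : ℕ → Bool, IsPathThrough T σ x := by
  have hch : ∀ τ : List Bool, ∃ b : Bool, τ ∈ T → τ ++ [b] ∈ T := by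
    intro τ
    by_cases h : τ ∈ T
    · exact (hchild τ h).imp fun b hb _ => hb
    · exact ⟨false, fun h' => absurd h' h⟩
  choose ch hch using hch
  let ρ : ℕ → List Bool := fun k => Nat.rec σ (fun _ ih => ih ++ [ch ih]) k
  have hρ0 : ρ 0 = σ := rfl
  have hρs : ∀ k, ρ (k+1) = ρ k ++ [ch (ρ k)] := fun k => rfl
  have hρT : ∀ k, ρ k ∈ T := by
    intro k; induction k with
    | zero => exact hσ
    | succ k ih => rw [hρs]; exact hch _ ih
  have hρlen : ∀ k, (ρ k).length = σ.length + k := by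
    intro k; induction k with
    | zero => simp [hρ0]
    | succ k ih => rw [hρs]; simp [ih]; omega
  have hρpre : ∀ {n m : ℕ}, n ≤ m → ρ n <+: ρ m := by
    intro n m h
    obtain ⟨d, rfl⟩ := Nat.exists_eq_add_of_le h
    clear h
    induction d with
    | zero => exact List.prefix_rfl
    | succ d ih =>
        rw [← Nat.add_assoc, hρs]
        exact ih.trans (List.prefix_append _ _)
  refine ⟨fun n => (ρ (n+1)).getD n false, ?_⟩
  have key : ∀ n : ℕ, (List.ofFn fun i : Fin n => (ρ (i+1)).getD i false) = (ρ n).take n := by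
    intro n
    apply List.ext_getElem
    · simp [hρlen]
    · intro i h₁ h₂
      simp only [List.getElem_ofFn, List.getElem_take]
      have hi : (i : ℕ) < (ρ (i+1)).length := by have := hρlen (i+1); omega
      rw [List.getD_eq_getElem _ _ hi]
      have hle : i + 1 ≤ n := by simpa using h₁
      exact (hρpre hle).getElem hi
  constructor
  · rw [key σ.length]
    have : σ <+: ρ σ.length := hρ0 ▸ hρpre (Nat.zero_le _)
    exact (List.prefix_iff_eq_take.mp this).symm
  · intro n
    rw [key n]
    exact hdown _ _ (List.take_prefix _ _) (hρT n)

end Paths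

/-- For a tree presentation `g` of a Boolean algebra `B`, with `T` the set of strings with
nonzero value: every node of `T` has a child in `T`, and the atoms of `B` are exactly the
values `g σ` for `σ ∈ T` isolating a unique path of `T`. -/
theorem atoms_of_tree_presentation (g : List Bool → B)
    (hroot : g [] = ⊤)
    (hsup : ∀ σ : List Bool, g σ = g (σ ++ [false]) ⊔ g (σ ++ [true]))
    (hinf : ∀ σ : List Bool, g (σ ++ [false]) ⊓ g (σ ++ [true]) = ⊥)
    (hgen : GeneratesBool (Set.range g))
    (T : Set (List Bool)) (hT : T = {σ : List Bool | g σ ≠ ⊥}) :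
    (∀ σ ∈ T, σ ++ [false] ∈ T ∨ σ ++ [true] ∈ T) ∧
    (∀ a : B, IsAtom a ↔
      ∃ σ ∈ T, a = g σ ∧ ∃! x : ℕ → Bool, IsPathThrough T σ x) := by
  subst hT
  have hmem : ∀ σ : List Bool, σ ∈ {σ : List Bool | g σ ≠ ⊥} ↔ g σ ≠ ⊥ := fun σ => Iff.rfl
  have hdown : ∀ σ τ : List Bool, σ <+: τ → τ ∈ {σ : List Bool | g σ ≠ ⊥} →
      σ ∈ {σ : List Bool | g σ ≠ ⊥} := by
    intro σ τ hp hτ hbot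
    exact hτ (le_bot_iff.mp (hbot ▸ g_le_of_prefix g hsup hp))
  have part1 : ∀ σ ∈ {σ : List Bool | g σ ≠ ⊥},
      σ ++ [false] ∈ {σ : List Bool | g σ ≠ ⊥} ∨ σ ++ [true] ∈ {σ : List Bool | g σ ≠ ⊥} := by
    intro σ hσ
    by_contra h
    push_neg at h
    obtain ⟨h1, h2⟩ := h
    rw [hmem] at h1 h2
    push_neg at h1 h2
    exact hσ (by rw [hsup σ, h1, h2, sup_idem])
  have hchild : ∀ τ ∈ {σ : List Bool | g σ ≠ ⊥}, ∃ b : Bool,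
      τ ++ [b] ∈ {σ : List Bool | g σ ≠ ⊥} := by
    intro τ hτ
    rcases part1 τ hτ with h | h
    · exact ⟨false, h⟩
    · exact ⟨true, h⟩
  refine ⟨part1, fun a => ⟨?_, ?_⟩⟩
  · -- atoms isolate paths
    intro ha
    obtain ⟨n, S, hS, rfl⟩ := rep_of_inBoolGen g hroot hsup hinf (hgen a)
    have hne : S.sup g ≠ ⊥ := ha.1
    rw [Ne, Finset.sup_eq_bot_iff] at hne
    push_neg at hne
    obtain ⟨σ, hσS, hσne⟩ := hne
    have hle : g σ ≤ S.sup g := Finset.le_sup hσS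
    have heq : g σ = S.sup g := (ha.le_iff.mp hle).resolve_left hσne
    have hσT : σ ∈ {σ : List Bool | g σ ≠ ⊥} := hσne
    refine ⟨σ, hσT, heq.symm, ?_⟩
    obtain ⟨x, hx⟩ := exists_path hdown hchild hσT
    refine ⟨x, hx, ?_⟩
    -- uniqueness of paths
    have uniq : ∀ y z : ℕ → Bool,
        IsPathThrough {σ : List Bool | g σ ≠ ⊥} σ y →
        IsPathThrough {σ : List Bool | g σ ≠ ⊥} σ z → y = z := by
      intro y z hy hz
      by_contra hyz
      have hex : ∃ m, y m ≠ z m := Function.ne_iff.mp hyz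
      classical
      let m := Nat.find hex
      have hm : y m ≠ z m := Nat.find_spec hex
      have hmin : ∀ i < m, y i = z i := fun i hi => by
        have := Nat.find_min hex hi
        simpa using this
      -- m ≥ σ.length
      have hmσ : σ.length ≤ m := by
        by_contra h
        push_neg at h
        have hfe : (fun i : Fin σ.length => y i) = fun i : Fin σ.length => z i :=
          List.ofFn_inj.mp (hy.1.trans hz.1.symm)
        exact hm (congrFun hfe ⟨m, h⟩)
      set ρ := List.ofFn fun i : Fin m => y i with hρdef
      have hρz : (List.ofFn fun i : Fin m => z i) = ρ :=
        List.ofFn_inj.mpr (funext fun i => (hmin i i.isLt).symm)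
      have hσρ : σ <+: ρ := by
        rw [← hy.1]
        exact ofFn_prefix y hmσ
      have hsucc_y : (List.ofFn fun i : Fin (m+1) => y i) = ρ ++ [y m] := by
        rw [List.ofFn_succ']
        simp only [List.concat_eq_append, Fin.coe_castSucc, Fin.val_last]
        rfl
      have hsucc_z : (List.ofFn fun i : Fin (m+1) => z i) = ρ ++ [z m] := by
        rw [List.ofFn_succ']
        simp only [List.concat_eq_append, Fin.coe_castSucc, Fin.val_last]
        rw [hρz]
      have hyT : g (ρ ++ [y m]) ≠ ⊥ := by
        have := hy.2 (m+1); rwa [hsucc_y] at this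
      have hzT : g (ρ ++ [z m]) ≠ ⊥ := by
        have := hz.2 (m+1); rwa [hsucc_z] at this
      have hyle : g (ρ ++ [y m]) ≤ S.sup g := by
        rw [← heq]
        exact g_le_of_prefix g hsup (hσρ.trans (List.prefix_append _ _))
      have hzle : g (ρ ++ [z m]) ≤ S.sup g := by
        rw [← heq]
        exact g_le_of_prefix g hsup (hσρ.trans (List.prefix_append _ _))
      have hya : g (ρ ++ [y m]) = S.sup g := (ha.le_iff.mp hyle).resolve_left hyT
      have hza : g (ρ ++ [z m]) = S.sup g := (ha.le_iff.mp hzle).resolve_left hzT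
      have hbot : g (ρ ++ [false]) ⊓ g (ρ ++ [true]) = ⊥ := hinf ρ
      cases hym : y m <;> cases hzm : z m
      · exact hm (hym.trans hzm.symm)
      · rw [hym] at hya; rw [hzm] at hza
        rw [hya, hza, inf_idem] at hbot
        exact ha.1 hbot
      · rw [hym] at hya; rw [hzm] at hza
        rw [hza, hya, inf_idem] at hbot
        exact ha.1 hbot
      · exact hm (hym.trans hzm.symm)
    exact fun y hy => uniq y x hy hx
  · -- isolated paths give atoms
    rintro ⟨σ, hσT, rfl, x, hx, hxuniq⟩
    have key : ∀ τ ∈ {σ : List Bool | g σ ≠ ⊥}, σ <+: τ →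
        τ = List.ofFn fun i : Fin τ.length => x i := by
      intro τ hτ hp
      obtain ⟨y, hy⟩ := exists_path hdown hchild hτ
      have hyσ : IsPathThrough {σ : List Bool | g σ ≠ ⊥} σ y := isPathThrough_of_prefix hp hy
      have := hxuniq y hyσ
      rw [← this]
      exact hy.1.symm
    constructor
    · exact hσT
    · intro b hb
      by_contra hbne
      obtain ⟨n₀, S₀, hS₀, rfl⟩ := rep_of_inBoolGen g hroot hsup hinf (hgen b)
      set n := max n₀ σ.length with hn
      obtain ⟨hL, hE⟩ := rep_lift g hsup hS₀ (n - n₀)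
      set S := S₀.biUnion (extF · (n - n₀)) with hSdef
      have hSlen : ∀ τ ∈ S, τ.length = n := by
        intro τ hτ; rw [hL τ hτ]; omega
      have hbS : S₀.sup g = S.sup g := hE.symm
      rw [hbS] at hb hbne
      have hσn : σ.length ≤ n := le_max_right _ _
      set w := List.ofFn fun i : Fin n => x i with hwdef
      -- every nonzero block of S equals w
      have hblock : ∀ τ ∈ S, g τ ≠ ⊥ → τ = w := by
        intro τ hτS hτne
        have hτlen : τ.length = n := hSlen τ hτS
        have hτle : g τ ≤ g σ := le_of_lt (lt_of_le_of_lt (Finset.le_sup hτS) hb)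
        -- σ <+: τ
        have hpre : σ <+: τ := by
          have h1 : g τ = g τ ⊓ g σ := (inf_eq_left.mpr hτle).symm
          rw [sup_extF g hsup σ (n - σ.length) |>.symm, Finset.sup_inf_distrib_left] at h1
          have h2 : ∃ ρ ∈ extF σ (n - σ.length), g τ ⊓ g ρ ≠ ⊥ := by
            by_contra hc
            push_neg at hc
            exact hτne (h1.trans (Finset.sup_eq_bot_iff _ _ |>.mpr hc))
          obtain ⟨ρ, hρ, hρne⟩ := h2
          have hρlen : ρ.length = n := by
            have := length_of_mem_extF hρ; omega
          have : τ = ρ := by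
            by_contra hne
            exact hρne (g_disjoint_of_ne g hsup hinf (hτlen.trans hρlen.symm) hne)
          rw [this]
          exact prefix_of_mem_extF hρ
        have := key τ hτne hpre
        rw [this, hτlen]
      -- S.sup g ≤ g w and g w ≤ S.sup g where some block nonzero
      have hbnebot : S.sup g ≠ ⊥ := hbne
      rw [Ne, Finset.sup_eq_bot_iff] at hbnebot
      push_neg at hbnebot
      obtain ⟨τ₀, hτ₀S, hτ₀ne⟩ := hbnebot
      have hτ₀w : τ₀ = w := hblock τ₀ hτ₀S hτ₀ne
      have hwle : g w ≤ S.sup g := hτ₀w ▸ Finset.le_sup hτ₀S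
      -- g σ ≤ S.sup g : contradiction with S.sup g < g σ
      have hσle : g σ ≤ S.sup g := by
        rw [← sup_extF g hsup σ (n - σ.length)]
        refine Finset.sup_le fun ρ hρ => ?_
        by_cases hρne : g ρ = ⊥
        · rw [hρne]; exact bot_le
        · have hρlen : ρ.length = n := by
            have := length_of_mem_extF hρ; omega
          have hρw : ρ = w := by
            have := key ρ hρne (prefix_of_mem_extF hρ)
            rw [this, hρlen]
          rw [hρw]
          exact hwle
      exact absurd hσle (not_le_of_gt hb)

end Hhs
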